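/- Suppose the number of clusters J → ∞ with cluster sizes bounded: i.e., fix infinite sequences n_j ∈ {1,…,B}, n_CO,j ∈ {1,…,n_j}, τ_j ∈ ℝ with |τ_j| ≤ C, and let p_j = n_CO,j/n_j. Assume the limits p̄ = lim_{J→∞} (1/J)Σ_{j=1}^J p_j > 0, n̄ = lim_{J→∞} (1/J)Σ_{j=1}^J n_CO,j, and L = lim_{J→∞} (1/J²) Σ_{1 ≤ j < l ≤ J} p_j p_l (n_l − n_j)(τ_j − τ_l) exist. Then the cluster-level identified value satisfies lim_{J→∞} ( τ_CL(J) − τ(J) ) = L / (p̄ · n̄), where τ_CL(J) and τ(J) are computed from the first J clusters. -/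

import Mathlib

open Finset Filter

lemma key_identity (p nn t : ℕ → ℝ) (J : ℕ) :
    (∑ j ∈ Finset.range J, ∑ l ∈ (Finset.range J).filter (fun l => j < l),
        p j * p l * (nn l - nn j) * (t j - t l))
      = (∑ j ∈ Finset.range J, p j * t j) * (∑ j ∈ Finset.range J, p j * nn j)
        - (∑ j ∈ Finset.range J, p j * nn j * t j) * (∑ j ∈ Finset.range J, p j) := by
  induction J with
  | zero => simp
  | succ J ih =>
    have h1 : ∀ j ∈ Finset.range J,
        (Finset.range (J+1)).filter (fun l => j < l)
          = insert J ((Finset.range J).filter (fun l => j < l)) := by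
      intro j hj
      simp only [Finset.mem_range] at hj
      ext l
      simp only [Finset.mem_filter, Finset.mem_range, Finset.mem_insert]
      omega
    have h2 : (Finset.range (J+1)).filter (fun l => J < l) = ∅ :=
      Finset.filter_false_of_mem fun l hl => by
        simp only [Finset.mem_range] at hl; omega
    rw [Finset.sum_range_succ, h2]
    have h3 : ∀ j ∈ Finset.range J,
        (∑ l ∈ (Finset.range (J+1)).filter (fun l => j < l),
          p j * p l * (nn l - nn j) * (t j - t l))
        = p j * p J * (nn J - nn j) * (t j - t J)
          + ∑ l ∈ (Finset.range J).filter (fun l => j < l),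
              p j * p l * (nn l - nn j) * (t j - t l) := by
      intro j hj
      rw [h1 j hj, Finset.sum_insert (by simp)]
    rw [Finset.sum_congr rfl h3, Finset.sum_add_distrib, ih]
    simp only [Finset.sum_range_succ]
    have e1 : (∑ j ∈ Finset.range J, p j * p J * (nn J - nn j) * (t j - t J))
        = (p J * nn J) * (∑ j ∈ Finset.range J, p j * t j)
          - (p J * nn J * t J) * (∑ j ∈ Finset.range J, p j)
          - p J * (∑ j ∈ Finset.range J, p j * nn j * t j)
          + (p J * t J) * (∑ j ∈ Finset.range J, p j * nn j) := by
      rw [Finset.mul_sum, Finset.mul_sum, Finset.mul_sum, Finset.mul_sum]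
      rw [← Finset.sum_sub_distrib, ← Finset.sum_sub_distrib, ← Finset.sum_add_distrib]
      exact Finset.sum_congr rfl fun j _ => by ring
    rw [e1]; ring

theorem stmt6
    (B : ℕ) (C : ℝ)
    (n nCO : ℕ → ℕ) (τc : ℕ → ℝ)
    (hn1 : ∀ j, 1 ≤ n j) (hnB : ∀ j, n j ≤ B)
    (hCO1 : ∀ j, 1 ≤ nCO j) (hCOn : ∀ j, nCO j ≤ n j)
    (hτb : ∀ j, |τc j| ≤ C)
    (p : ℕ → ℝ) (hp : ∀ j, p j = (nCO j : ℝ) / n j)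
    (pbar nbar L : ℝ) (hpbar : 0 < pbar)
    (hpbarlim : Tendsto (fun J : ℕ => (∑ j ∈ Finset.range J, p j) / J) atTop (nhds pbar))
    (hnbarlim : Tendsto (fun J : ℕ => (∑ j ∈ Finset.range J, (nCO j : ℝ)) / J)
      atTop (nhds nbar))
    (hLlim : Tendsto (fun J : ℕ =>
        (∑ j ∈ Finset.range J, ∑ l ∈ (Finset.range J).filter (fun l => j < l),
          p j * p l * ((n l : ℝ) - n j) * (τc j - τc l)) / (J : ℝ) ^ 2)
      atTop (nhds L))
    (τ τCL : ℕ → ℝ)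
    (hτ : ∀ J, τ J = (∑ j ∈ Finset.range J, (nCO j : ℝ) * τc j) /
      (∑ j ∈ Finset.range J, (nCO j : ℝ)))
    (hτCL : ∀ J, τCL J = (∑ j ∈ Finset.range J, p j * τc j) /
      (∑ j ∈ Finset.range J, p j)) :
    Tendsto (fun J : ℕ => τCL J - τ J) atTop (nhds (L / (pbar * nbar))) := by
  -- basic facts
  have hnpos : ∀ j, (0:ℝ) < n j := fun j => by
    exact_mod_cast Nat.lt_of_lt_of_le Nat.zero_lt_one (hn1 j)
  have hppos : ∀ j, 0 < p j := fun j => by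
    rw [hp j]
    exact div_pos (by exact_mod_cast Nat.lt_of_lt_of_le Nat.zero_lt_one (hCO1 j)) (hnpos j)
  have hpn : ∀ j, p j * (n j : ℝ) = (nCO j : ℝ) := fun j => by
    rw [hp j, div_mul_cancel₀ _ (ne_of_gt (hnpos j))]
  -- nbar ≥ 1
  have hnbar : 0 < nbar := by
    have h1 : ∀ᶠ J in atTop, (1:ℝ) ≤ (∑ j ∈ Finset.range J, (nCO j : ℝ)) / J := by
      filter_upwards [eventually_ge_atTop 1] with J hJ
      have hJ0 : (0:ℝ) < J := by exact_mod_cast hJ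
      rw [le_div_iff₀ hJ0, one_mul]
      calc (J:ℝ) = ∑ j ∈ Finset.range J, (1:ℝ) := by simp
        _ ≤ ∑ j ∈ Finset.range J, (nCO j : ℝ) :=
          Finset.sum_le_sum fun j _ => by exact_mod_cast hCO1 j
    have := le_of_tendsto_of_tendsto (f := fun _ : ℕ => (1:ℝ))
      tendsto_const_nhds hnbarlim h1
    linarith
  have hne : pbar * nbar ≠ 0 := ne_of_gt (mul_pos hpbar hnbar)
  have hmain : Tendsto (fun J : ℕ =>
      ((∑ j ∈ Finset.range J, ∑ l ∈ (Finset.range J).filter (fun l => j < l),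
          p j * p l * ((n l : ℝ) - n j) * (τc j - τc l)) / (J : ℝ) ^ 2)
        / (((∑ j ∈ Finset.range J, p j) / J) * ((∑ j ∈ Finset.range J, (nCO j : ℝ)) / J)))
      atTop (nhds (L / (pbar * nbar))) :=
    hLlim.div (hpbarlim.mul hnbarlim) hne
  refine hmain.congr' ?_
  filter_upwards [eventually_ge_atTop 1] with J hJ
  have hJ0 : (0:ℝ) < J := by exact_mod_cast hJ
  have hPpos : 0 < ∑ j ∈ Finset.range J, p j :=
    Finset.sum_pos (fun j _ => hppos j) (Finset.nonempty_range_iff.mpr (by omega))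
  have hNpos : 0 < ∑ j ∈ Finset.range J, (nCO j : ℝ) :=
    Finset.sum_pos (fun j _ => by exact_mod_cast Nat.lt_of_lt_of_le Nat.zero_lt_one (hCO1 j))
      (Finset.nonempty_range_iff.mpr (by omega))
  have hkey := key_identity p (fun j => (n j : ℝ)) τc J
  have hrw1 : (∑ j ∈ Finset.range J, p j * (n j : ℝ)) = ∑ j ∈ Finset.range J, (nCO j : ℝ) :=
    Finset.sum_congr rfl fun j _ => hpn j
  have hrw2 : (∑ j ∈ Finset.range J, p j * (n j : ℝ) * τc j)
      = ∑ j ∈ Finset.range J, (nCO j : ℝ) * τc j :=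
    Finset.sum_congr rfl fun j _ => by rw [hpn j]
  rw [hrw1, hrw2] at hkey
  rw [hkey, hτCL, hτ]
  field_simp
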